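/- Fix a prime q. The map Ψ : (0,∞) × ℚ_q → (ℤ[X] → ℝ) defined by Ψ(ω, s)(P) = ‖P(s)‖_q^ω (where ‖·‖_q is the q-adic norm on ℚ_q and P(s) is the evaluation of the integer polynomial P at s) is a topological embedding of (0,∞) × ℚ_q (with the product topology) into the product space ℤ[X] → ℝ with the topology of pointwise convergence; that is, Ψ is injective, continuous, and a homeomorphism onto its image. -/

import Mathlib

open Filter Topology Polynomial

variable {q : ℕ} [Fact q.Prime]

noncomputable def Psi (q : ℕ) [Fact q.Prime] :
    Set.Ioi (0 : ℝ) × ℚ_[q] → Polynomial ℤ → ℝ :=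
  fun x P => ‖(Polynomial.aeval x.2 P : ℚ_[q])‖ ^ (x.1 : ℝ)

theorem psi_Cq (x : Set.Ioi (0 : ℝ) × ℚ_[q]) :
    Psi q x (C (q : ℤ)) = ((q : ℝ)⁻¹) ^ (x.1 : ℝ) := by
  simp [Psi, Padic.norm_p]

theorem psi_continuous : Continuous (Psi q) := by
  apply continuous_pi
  intro P
  rw [continuous_iff_continuousAt]
  intro x
  have h1 : Continuous fun x : Set.Ioi (0:ℝ) × ℚ_[q] => ‖(aeval x.2 P : ℚ_[q])‖ :=
    (P.continuous_aeval.comp continuous_snd).norm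
  have h2 : Continuous fun x : Set.Ioi (0:ℝ) × ℚ_[q] => (x.1 : ℝ) :=
    continuous_subtype_val.comp continuous_fst
  exact h1.continuousAt.rpow h2.continuousAt (Or.inr x.1.2)

theorem psi_lin (x : Set.Ioi (0 : ℝ) × ℚ_[q]) (a : ℤ) (n : ℕ) :
    Psi q x (C a - C ((q:ℤ)^n) * X) = ‖(q:ℚ_[q])^n * x.2 - (a : ℚ_[q])‖ ^ (x.1 : ℝ) := by
  simp only [Psi, map_sub, map_mul, aeval_C, aeval_X]
  rw [← norm_neg]
  push_cast [neg_sub]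
  simp [eq_intCast]

theorem psi_comap_le (x₀ : Set.Ioi (0 : ℝ) × ℚ_[q]) :
    comap (Psi q) (𝓝 (Psi q x₀)) ≤ 𝓝 x₀ := by
  have hqR : (1:ℝ) < (q:ℝ) := by exact_mod_cast (Fact.out : q.Prime).one_lt
  have hqi0 : (0:ℝ) < (q:ℝ)⁻¹ := by positivity
  have hqi1 : ((q:ℝ))⁻¹ < 1 := inv_lt_one_of_one_lt₀ hqR
  have hlog : Real.log ((q:ℝ)⁻¹) ≠ 0 := ne_of_lt (Real.log_neg hqi0 hqi1)
  set F := comap (Psi q) (𝓝 (Psi q x₀)) with hF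
  have hT : Tendsto (Psi q) F (𝓝 (Psi q x₀)) := tendsto_comap
  have hP : ∀ P : Polynomial ℤ, Tendsto (fun x => Psi q x P) F (𝓝 (Psi q x₀ P)) :=
    tendsto_pi_nhds.1 hT
  set ω₀ : ℝ := (x₀.1 : ℝ) with hω
  have hω₀ : 0 < ω₀ := x₀.1.2
  have h0 : Tendsto (fun x : Set.Ioi (0:ℝ) × ℚ_[q] => ((q:ℝ)⁻¹) ^ ((x.1:ℝ))) F
      (𝓝 (((q:ℝ)⁻¹) ^ ω₀)) := by
    simpa only [psi_Cq] using hP (C (q:ℤ))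
  have hlogc : ContinuousAt (fun y : ℝ => Real.log y / Real.log ((q:ℝ)⁻¹))
      (((q:ℝ)⁻¹) ^ ω₀) :=
    (Real.continuousAt_log (ne_of_gt (Real.rpow_pos_of_pos hqi0 _))).div_const _
  have h1 : Tendsto (fun x : Set.Ioi (0:ℝ) × ℚ_[q] => (x.1:ℝ)) F (𝓝 ω₀) := by
    have := (hlogc.tendsto).comp h0
    simpa only [Function.comp_def, Real.log_rpow hqi0, mul_div_cancel_right₀ _ hlog] using this
  have h2 : Tendsto (fun x : Set.Ioi (0:ℝ) × ℚ_[q] => x.2) F (𝓝 x₀.2) := by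
    rw [Metric.tendsto_nhds]
    intro ε hε
    obtain ⟨n, hn⟩ := pow_unbounded_of_one_lt ‖x₀.2‖ hqR
    set c : ℝ := (q:ℝ) ^ n with hcdef
    have hc : 0 < c := by positivity
    have hqn : ‖((q:ℚ_[q]))^n‖ = c⁻¹ := by
      rw [norm_pow, Padic.norm_p]
      simp [hcdef, inv_pow]
    have hz : ‖(q:ℚ_[q])^n * x₀.2‖ ≤ 1 := by
      rw [norm_mul, hqn]
      calc c⁻¹ * ‖x₀.2‖ ≤ c⁻¹ * c := by
            exact mul_le_mul_of_nonneg_left hn.le (by positivity)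
        _ = 1 := inv_mul_cancel₀ hc.ne'
      
    set B : ℝ := min (ε / c) (1/2) with hBdef
    have hB0 : 0 < B := lt_min (by positivity) (by norm_num)
    have hB1 : B < 1 := lt_of_le_of_lt (min_le_right _ _) (by norm_num)
    set z : ℤ_[q] := (⟨(q:ℚ_[q])^n * x₀.2, hz⟩ : ℤ_[q]) with hzdef
    obtain ⟨a, ha⟩ := (PadicInt.denseRange_intCast (p:=q)).exists_dist_lt
        z (show (0:ℝ) < B^3 by positivity)
    rw [dist_eq_norm] at ha
    have ha' : ‖(q:ℚ_[q])^n * x₀.2 - (a:ℚ_[q])‖ < B^3 := by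
      have hcoe : ((z - (a:ℤ_[q]) : ℤ_[q]) : ℚ_[q])
          = (q:ℚ_[q])^n * x₀.2 - (a:ℚ_[q]) := by
        rw [PadicInt.coe_sub, PadicInt.coe_intCast, hzdef]
      rwa [PadicInt.norm_def, hcoe] at ha
    have hPx₀ : Psi q x₀ (C a - C ((q:ℤ)^n) * X) < B ^ (2*ω₀) := by
      rw [psi_lin]
      calc ‖(q:ℚ_[q])^n * x₀.2 - (a:ℚ_[q])‖ ^ (ω₀)
          ≤ (B^3 : ℝ) ^ ω₀ := Real.rpow_le_rpow (norm_nonneg _) ha'.le hω₀.le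
        _ = B ^ ((3:ℕ) * ω₀) := by rw [← Real.rpow_natCast B 3, ← Real.rpow_mul hB0.le]
        _ < B ^ (2*ω₀) := Real.rpow_lt_rpow_of_exponent_gt hB0 hB1 (by push_cast; nlinarith)
    have ev1 := (hP _).eventually_lt_const hPx₀
    have ev2 := h1.eventually_lt_const (show ω₀ < 2*ω₀ by linarith)
    filter_upwards [ev1, ev2] with x hx1 hx2
    rw [psi_lin] at hx1
    rw [dist_eq_norm]
    set b := ‖(q:ℚ_[q])^n * x.2 - (a:ℚ_[q])‖ with hbdef
    have hb : b < B := by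
      by_contra hcon
      push_neg at hcon
      have hbpos : 0 < b := lt_of_lt_of_le hB0 hcon
      have hBle : B ^ (2*ω₀) ≤ b ^ (2*ω₀) := Real.rpow_le_rpow hB0.le hcon (by positivity)
      rcases le_or_gt 1 b with h | h
      · have h1b : (1:ℝ) ≤ b ^ ((x.1:ℝ)) := Real.one_le_rpow h (le_of_lt x.1.2)
        have hB2 : B ^ (2*ω₀) < 1 := Real.rpow_lt_one hB0.le hB1 (by positivity)
        linarith
      · have hmono : b ^ (2*ω₀) ≤ b ^ ((x.1:ℝ)) :=
          Real.rpow_le_rpow_of_exponent_ge hbpos h.le hx2.le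
        linarith
    have hnorm : ‖x.2 - x₀.2‖ = c * ‖(q:ℚ_[q])^n * (x.2 - x₀.2)‖ := by
      rw [norm_mul, hqn, ← mul_assoc, mul_inv_cancel₀ hc.ne', one_mul]
    have hB3B : (B:ℝ)^3 ≤ B := by
      calc B^3 ≤ B^1 := pow_le_pow_of_le_one hB0.le hB1.le (by norm_num)
        _ = B := pow_one B
    have hultra : ‖(q:ℚ_[q])^n * (x.2 - x₀.2)‖ < B := by
      have heq : (q:ℚ_[q])^n * (x.2 - x₀.2)
          = ((q:ℚ_[q])^n * x.2 - (a:ℚ_[q])) + -((q:ℚ_[q])^n * x₀.2 - (a:ℚ_[q])) := by ring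
      rw [heq]
      refine lt_of_le_of_lt (Padic.nonarchimedean _ _) ?_
      rw [norm_neg]
      exact max_lt hb (lt_of_lt_of_le ha' hB3B)
    calc ‖x.2 - x₀.2‖ = c * ‖(q:ℚ_[q])^n * (x.2 - x₀.2)‖ := hnorm
      _ < c * B := (mul_lt_mul_iff_right₀ hc).2 hultra
      _ ≤ c * (ε/c) := by
          exact mul_le_mul_of_nonneg_left (min_le_left _ _) hc.le
      _ = ε := by field_simp
  exact tendsto_id'.1 (by simpa [Function.id_def] using Tendsto.prodMk_nhds (tendsto_subtype_rng.2 h1) h2)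



/-- For a fixed prime `q`, the map `Ψ : (0,∞) × ℚ_q → (ℤ[X] → ℝ)`,
`Ψ(ω,s)(P) = ‖P(s)‖_q^ω`, is injective, continuous, and a topological embedding
(a homeomorphism onto its image), where `ℤ[X] → ℝ` carries the topology of
pointwise convergence. -/
theorem embedding_Qq_omega_family (q : ℕ) [Fact q.Prime] :
    Function.Injective
        (fun x : Set.Ioi (0 : ℝ) × ℚ_[q] =>
          fun P : Polynomial ℤ => ‖(Polynomial.aeval x.2 P : ℚ_[q])‖ ^ (x.1 : ℝ)) ∧
      Continuous
        (fun x : Set.Ioi (0 : ℝ) × ℚ_[q] =>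
          fun P : Polynomial ℤ => ‖(Polynomial.aeval x.2 P : ℚ_[q])‖ ^ (x.1 : ℝ)) ∧
      Topology.IsEmbedding
        (fun x : Set.Ioi (0 : ℝ) × ℚ_[q] =>
          fun P : Polynomial ℤ => ‖(Polynomial.aeval x.2 P : ℚ_[q])‖ ^ (x.1 : ℝ)) := by
  have hcont : Continuous (Psi q) := psi_continuous
  have hinj : Function.Injective (Psi q) := by
    intro x₁ x₂ h
    have hp : pure x₁ ≤ Filter.comap (Psi q) (nhds (Psi q x₂)) := by
      rw [← Filter.map_le_iff_le_comap, Filter.map_pure, h]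
      exact pure_le_nhds _
    exact (specializes_iff_pure.2 (hp.trans (psi_comap_le x₂))).eq
  have hemb : Topology.IsEmbedding (Psi q) := by
    refine ⟨Topology.isInducing_iff_nhds.2 fun x => le_antisymm ?_ (psi_comap_le x), hinj⟩
    exact (hcont.tendsto x).le_comap
  exact ⟨hinj, hcont, hemb⟩
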